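/- Let (π, X) be a Fisher market equilibrium with unit supplies for agents with continuous, strictly monotonic, non-satiable, perfectly complementary utilities u_i and budgets e_i > 0 summing to 1, and let Y ≤ X be a parsimonious allocation with u_i(y^i) = u_i(x^i) for all i. Then Y is bottleneck-based fair: for every agent i there exists a good j with π_j > 0 such that ∑_k y^k_j = 1 (j is a bottleneck) and y^i_j ≥ e_i. -/

import Mathlib

open scoped NNReal

abbrev Bundle (m : ℕ) := Fin m → ℝ≥0

def Parsimonious {m : ℕ} (u : Bundle m → ℝ) (x : Bundle m) : Prop :=
  ∀ z : Bundle m, z ≤ x → z ≠ x → u z < u x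

def PerfComp {m : ℕ} (u : Bundle m → ℝ) : Prop :=
  ∀ x y : Bundle m, u (x ⊓ y) = min (u x) (u y)

def NonSatiableStrictMono {m : ℕ} (u : Bundle m → ℝ) : Prop :=
  (∀ x : Bundle m, ∃ y : Bundle m, u x < u y) ∧
  (∀ x y : Bundle m, (∀ j, x j < y j) → u x < u y)

def FisherEquilibrium {n m : ℕ} (u : Fin n → Bundle m → ℝ) (e : Fin n → ℝ≥0)
    (pr : Fin m → ℝ≥0) (X : Fin n → Bundle m) : Prop :=
  (∀ i, (∑ j, pr j * X i j) ≤ e i ∧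
    ∀ y : Bundle m, (∑ j, pr j * y j) ≤ e i → u i y ≤ u i (X i)) ∧
  (∀ j, ∑ i, X i j = 1)

/-- The parsimonious reduction of a Fisher market equilibrium is bottleneck-based
fair: every agent receives at least his entitlement of some bottleneck good. -/
theorem fisher_equilibrium_BBF {n m : ℕ} (u : Fin n → Bundle m → ℝ)
    (hcont : ∀ i, Continuous (u i)) (hns : ∀ i, NonSatiableStrictMono (u i))
    (hpc : ∀ i, PerfComp (u i))
    (e : Fin n → ℝ≥0) (he : ∀ i, 0 < e i) (hesum : ∑ i, e i = 1)
    (pr : Fin m → ℝ≥0) (X : Fin n → Bundle m)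
    (heq : FisherEquilibrium u e pr X)
    (Y : Fin n → Bundle m) (hYX : ∀ i, Y i ≤ X i)
    (hYpars : ∀ i, Parsimonious (u i) (Y i))
    (hYu : ∀ i, u i (Y i) = u i (X i)) :
    ∀ i, ∃ j, 0 < pr j ∧ (∑ k, Y k j = 1) ∧ e i ≤ Y i j := by
  obtain ⟨hopt, hsupply⟩ := heq
  set P : ℝ≥0 := ∑ j, pr j with hP
  -- budget exhaustion: any bundle ≤ X k with the same utility costs exactly e k
  have key : ∀ (k : Fin n) (w : Bundle m), w ≤ X k → u k w = u k (X k) →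
      (∑ j, pr j * w j) = e k := by
    intro k w hwX hwu
    have hle : (∑ j, pr j * w j) ≤ e k :=
      le_trans (Finset.sum_le_sum fun j _ => mul_le_mul_right (hwX j) _) (hopt k).1
    rcases eq_or_lt_of_le hle with h | h
    · exact h
    exfalso
    set S : ℝ≥0 := ∑ j, pr j * w j with hS
    set ε : ℝ≥0 := (e k - S) / (P + 1) with hε
    have hεpos : 0 < ε := by
      rw [pos_iff_ne_zero]
      exact div_ne_zero (by simpa [pos_iff_ne_zero] using tsub_pos_of_lt h)
        (by positivity)
    have hcost : (∑ j, pr j * (w j + ε)) ≤ e k := by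
      have h1 : (∑ j, pr j * (w j + ε)) = S + ε * P := by
        simp [mul_add, Finset.sum_add_distrib, hS, hP, Finset.sum_mul, mul_comm]
      have h2 : ε * P ≤ ε * (P + 1) := mul_le_mul_right (le_add_of_nonneg_right zero_le_one) _
      have h3 : ε * (P + 1) = e k - S := by
        rw [hε, div_mul_cancel₀]
        positivity
      calc (∑ j, pr j * (w j + ε)) = S + ε * P := h1
        _ ≤ S + (e k - S) := by
            exact add_le_add_right (h3 ▸ h2) S
        _ = e k := add_tsub_cancel_of_le hle
    have h4 : u k (fun j => w j + ε) ≤ u k (X k) := (hopt k).2 _ hcost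
    have h5 : u k w < u k (fun j => w j + ε) :=
      (hns k).2 _ _ (fun j => lt_add_of_pos_right _ hεpos)
    rw [hwu] at h5
    exact absurd h4 (not_le.mpr h5)
  have hXb : ∀ k, (∑ j, pr j * X k j) = e k := fun k => key k (X k) le_rfl rfl
  have hYb : ∀ k, (∑ j, pr j * Y k j) = e k := fun k => key k (Y k) (hYX k) (hYu k)
  -- on positively priced goods, Y = X
  have hYXj : ∀ (k : Fin n) (j : Fin m), 0 < pr j → Y k j = X k j := by
    intro k j hj
    have hsum : (∑ j, pr j * Y k j) = ∑ j, pr j * X k j := by rw [hXb, hYb]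
    have hterm : ∀ j ∈ Finset.univ, pr j * Y k j ≤ pr j * X k j :=
      fun j _ => mul_le_mul_right (hYX k j) _
    have := (Finset.sum_eq_sum_iff_of_le hterm).mp hsum j (Finset.mem_univ j)
    exact mul_left_cancel₀ hj.ne' this
  -- prices sum to 1
  have hP1 : P = 1 := by
    calc P = ∑ j, pr j * ∑ k, X k j := by
          simp [hsupply, hP]
      _ = ∑ j, ∑ k, pr j * X k j := by
          simp [Finset.mul_sum]
      _ = ∑ k, ∑ j, pr j * X k j := Finset.sum_comm
      _ = ∑ k, e k := by simp [hXb]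
      _ = 1 := hesum
  intro i
  -- some positively priced good gives i at least e i
  have hj : ∃ j, 0 < pr j ∧ e i ≤ X i j := by
    by_contra hc
    push_neg at hc
    have hjpos : ∃ j ∈ Finset.univ, pr j * X i j < pr j * e i := by
      by_contra h'
      push_neg at h'
      have hall : ∀ j, pr j = 0 := by
        intro j
        by_contra hne
        have hp : 0 < pr j := pos_iff_ne_zero.mpr hne
        exact absurd (mul_lt_mul_of_pos_left (hc j hp) hp) (not_lt.mpr (h' j (Finset.mem_univ j)))
      have : P = 0 := by simp [hP, hall]
      rw [hP1] at this
      exact one_ne_zero this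
    have hlt : (∑ j, pr j * X i j) < ∑ j, pr j * e i := by
      apply Finset.sum_lt_sum ?_ hjpos
      intro j _
      rcases eq_zero_or_pos (pr j) with h0 | hp
      · simp [h0]
      · exact le_of_lt (mul_lt_mul_of_pos_left (hc j hp) hp)
    rw [hXb, ← Finset.sum_mul, ← hP, hP1, one_mul] at hlt
    exact lt_irrefl _ hlt
  obtain ⟨j, hjp, hje⟩ := hj
  refine ⟨j, hjp, ?_, ?_⟩
  · rw [Finset.sum_congr rfl fun k _ => hYXj k j hjp]
    exact hsupply j
  · rw [hYXj i j hjp]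
    exact hje
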